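/- Let Σ ⊆ {T, B, 4, D}. For all h and n, ⊢_{KΣ} ⊕C_{h,n}. -/

import Mathlib

namespace ModalSOA

/-- Modal formulas: propositional variables, propositional constants, ⊥, →, □. -/
inductive Formula : Type
  | var : ℕ → Formula
  | const : ℕ → Formula
  | bot : Formula
  | imp : Formula → Formula → Formula
  | box : Formula → Formula
deriving DecidableEq

namespace Formula

/-- ¬φ := φ → ⊥ -/
def neg (φ : Formula) : Formula := φ.imp bot

/-- ⊤ := ¬⊥ -/
def top : Formula := bot.neg

/-- ◇φ := ¬□¬φ -/
def dia (φ : Formula) : Formula := φ.neg.box.neg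

/-- φ ∧ ψ := ¬(φ → ¬ψ) -/
def and (φ ψ : Formula) : Formula := (φ.imp ψ.neg).neg

/-- φ ∨ ψ := ¬φ → ψ -/
def or (φ ψ : Formula) : Formula := φ.neg.imp ψ

/-- Uniform substitution: substitute formulas for propositional variables,
    leaving propositional constants fixed. -/
def subst (σ : ℕ → Formula) : Formula → Formula
  | var n => σ n
  | const n => const n
  | bot => bot
  | imp φ ψ => imp (φ.subst σ) (ψ.subst σ)
  | box φ => box (φ.subst σ)

end Formula

open Formula

/-- The propositional variable p. -/
def pv : Formula := .var 0
/-- The propositional variable q. -/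
def qv : Formula := .var 1
/-- The propositional variable r. -/
def rv : Formula := .var 2

/-- The seven extra modal axioms considered: T, B, 4, 5, D, .2, L. -/
inductive ModalAxiom : Type
  | T | B | four | five | D | dot2 | L
deriving DecidableEq

/-- The modal formula corresponding to each axiom name. -/
def ModalAxiom.fml : ModalAxiom → Formula
  | .T => pv.box.imp pv                       -- □p → p
  | .B => pv.imp pv.dia.box                   -- p → □◇p
  | .four => pv.box.imp pv.box.box            -- □p → □□p
  | .five => pv.dia.imp pv.dia.box            -- ◇p → □◇p
  | .D => pv.box.imp pv.dia                   -- □p → ◇p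
  | .dot2 => pv.box.dia.imp pv.dia.box        -- ◇□p → □◇p
  | .L => (pv.box.imp pv).box.imp pv.box      -- □(□p→p) → □p

/-- Hilbert-style provability for the normal modal logic with extra axioms `Ax`:
classical propositional axioms, K, members of `Ax`, modus ponens, necessitation,
and uniform substitution. -/
inductive Prv (Ax : Set Formula) : Formula → Prop
  | ax1 : Prv Ax (pv.imp (qv.imp pv))
  | ax2 : Prv Ax ((pv.imp (qv.imp rv)).imp ((pv.imp qv).imp (pv.imp rv)))
  | ax3 : Prv Ax ((pv.neg.imp qv.neg).imp (qv.imp pv))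
  | axK : Prv Ax ((pv.imp qv).box.imp (pv.box.imp qv.box))
  | extra {φ} : φ ∈ Ax → Prv Ax φ
  | mp {φ ψ} : Prv Ax (φ.imp ψ) → Prv Ax φ → Prv Ax ψ
  | nec {φ} : Prv Ax φ → Prv Ax φ.box
  | subst {φ} (σ : ℕ → Formula) : Prv Ax φ → Prv Ax (φ.subst σ)

/-- The axiom set of the logic KΣ. -/
def KAxioms (Sig : Set ModalAxiom) : Set Formula := ModalAxiom.fml '' Sig

/-- The axiom set of GL = K{L}. -/
def GLAx : Set Formula := KAxioms {ModalAxiom.L}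

/-- Conjunction of a list of formulas (empty conjunction is ⊤). -/
def listConj : List Formula → Formula
  | [] => top
  | [φ] => φ
  | φ :: ψ :: l => φ.and (listConj (ψ :: l))

/-- Disjunction of a list of formulas (empty disjunction is ⊥). -/
def listDisj : List Formula → Formula
  | [] => bot
  | [φ] => φ
  | φ :: ψ :: l => φ.or (listDisj (ψ :: l))

/-- Pbl(Γ, φ): there are ψ₁,…,ψₙ ∈ Γ with ⊢ (ψ₁∧…∧ψₙ) → φ. -/
def Pbl (Ax : Set Formula) (Γ : Set Formula) (φ : Formula) : Prop :=
  ∃ l : List Formula, (∀ ψ ∈ l, ψ ∈ Γ) ∧ Prv Ax ((listConj l).imp φ)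

/-- A formula φ is consistent if ⊬ φ → ⊥. -/
def FmlConsistent (Ax : Set Formula) (φ : Formula) : Prop := ¬ Prv Ax (φ.imp bot)

/-- A set Γ is consistent if ¬Pbl(Γ, ⊥). -/
def SetConsistent (Ax : Set Formula) (Γ : Set Formula) : Prop := ¬ Pbl Ax Γ bot

/-- Γ is maximally consistent: consistent, closed under deduction, and for
every φ, φ ∈ Γ or ¬φ ∈ Γ. -/
def MaxConsistent (Ax : Set Formula) (Γ : Set Formula) : Prop :=
  SetConsistent Ax Γ ∧ (∀ φ, Pbl Ax Γ φ → φ ∈ Γ) ∧ (∀ φ, φ ∈ Γ ∨ φ.neg ∈ Γ)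

/-- Euclidean relation. -/
def Euclidean {W : Type*} (R : W → W → Prop) : Prop := ∀ ⦃x y z⦄, R x y → R x z → R y z

/-- Serial relation. -/
def Serial {W : Type*} (R : W → W → Prop) : Prop := ∀ x, ∃ y, R x y

/-- Directed relation. -/
def Directed {W : Type*} (R : W → W → Prop) : Prop :=
  ∀ ⦃x y z⦄, R x y → R x z → ∃ s, R y s ∧ R z s

/-- No infinite ascending R-sequence. -/
def NoInfiniteAscent {W : Type*} (R : W → W → Prop) : Prop :=
  ¬ ∃ f : ℕ → W, ∀ n, R (f n) (f (n + 1))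

/-- A frame (with relation R) is appropriate to a given modal axiom. -/
def AppropriateTo {W : Type*} (R : W → W → Prop) : ModalAxiom → Prop
  | .T => Reflexive R
  | .B => Symmetric R
  | .four => Transitive R
  | .five => Euclidean R
  | .D => Serial R
  | .dot2 => Directed R
  | .L => Transitive R ∧ NoInfiniteAscent R

/-- A frame is appropriate to Σ if it is appropriate to each member of Σ. -/
def Appropriate {W : Type*} (R : W → W → Prop) (Sig : Set ModalAxiom) : Prop :=
  ∀ a ∈ Sig, AppropriateTo R a

/-- A valuation on a frame: truth values for all formulas, respecting the
Kripke clauses for ⊥, →, □. -/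
structure Valuation {W : Type*} (R : W → W → Prop) where
  val : W → Formula → Bool
  val_bot : ∀ w, val w Formula.bot = false
  val_imp : ∀ w φ ψ, val w (φ.imp ψ) = (!(val w φ) || val w ψ)
  val_box : ∀ w φ, val w φ.box = true ↔ ∀ v, R w v → val v φ = true

/-- F ⊩ φ : every valuation on the frame makes φ true at every world. -/
def FrameForces {W : Type*} (R : W → W → Prop) (φ : Formula) : Prop :=
  ∀ V : Valuation R, ∀ w : W, V.val w φ = true

/-- Height of a formula. -/
def ht : Formula → ℕ
  | .imp φ ψ => max (ht φ) (ht ψ)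
  | .box φ => 1 + ht φ
  | _ => 0

/-- Order of a formula, with respect to the fixed enumeration `atom` of
atomic formulas. -/
def ord : Formula → ℕ
  | .bot => 0
  | .var k => 2 * k + 1
  | .const k => 2 * k + 2
  | .imp φ ψ => max (ord φ) (ord ψ)
  | .box φ => ord φ

/-- A fixed enumeration p₀, p₁, … of the atomic formulas (⊥, variables and
constants), with `ord (atom n) = n`. -/
def atom : ℕ → Formula
  | 0 => .bot
  | n + 1 => if n % 2 = 0 then .var (n / 2) else .const (n / 2)

/-- φ ∈ L_{h,n}. -/
def InL (h n : ℕ) (φ : Formula) : Prop := ht φ ≤ h ∧ ord φ ≤ n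

/-- T̂ for T ⊆ {p₀,…,pₙ}: the conjunction of the atoms in T and the negations
of the remaining atoms among p₀,…,pₙ. -/
def hatT (n : ℕ) (T : List ℕ) : Formula :=
  listConj ((List.range (n + 1)).map (fun i => if i ∈ T then atom i else (atom i).neg))

/-- The canonical formula α_{S,T} = (∧_{ψ∈S} ◇ψ) ∧ □(∨S) ∧ T̂. -/
def canonAlpha (n : ℕ) (S : List Formula) (T : List ℕ) : Formula :=
  (listConj (S.map dia)).and (((listDisj S).box).and (hatT n T))

/-- The canonical formulas C_{h,n} (as a finite list). -/
def C : ℕ → ℕ → List Formula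
  | 0, n => (List.range (n + 1)).sublists.map (hatT n)
  | h + 1, n => (C h n).sublists.flatMap
      (fun S => (List.range (n + 1)).sublists.map (fun T => canonAlpha n S T))

/-- ⊕X := ∨_{α∈X}(α ∧ ∧_{β∈X\{α}} ¬β). -/
def bigOplus (X : List Formula) : Formula :=
  listDisj (X.map (fun α => α.and (listConj ((X.filter (· ≠ α)).map neg))))

/-- The set of subformulas of a formula. -/
def sub : Formula → Finset Formula
  | .imp φ ψ => insert (Formula.imp φ ψ) (sub φ ∪ sub ψ)
  | .box φ => insert φ.box (sub φ)
  | a => {a}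

/-- (W, R, V) is a weak Kripke model of φ: W nonempty and V satisfies the
valuation clauses for ⊥, →, □ on the subformulas of φ. -/
structure IsWeakKripkeModel (φ : Formula) {W : Type*} (R : W → W → Prop)
    (V : W → Formula → Bool) : Prop where
  nonempty : Nonempty W
  val_bot : ∀ w, Formula.bot ∈ sub φ → V w Formula.bot = false
  val_imp : ∀ w ψ θ, ψ.imp θ ∈ sub φ → V w (ψ.imp θ) = (!(V w ψ) || V w θ)
  val_box : ∀ w ψ, ψ.box ∈ sub φ → (V w ψ.box = true ↔ ∀ v, R w v → V v ψ = true)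

/-- W̃ : the KΣ-consistent α ∈ C_{h+1,n} with ⊢ α → φ. -/
def tildeW (Ax : Set Formula) (φ : Formula) (h n : ℕ) : Set Formula :=
  {α | α ∈ C (h + 1) n ∧ FmlConsistent Ax α ∧ Prv Ax (α.imp φ)}

/-- α →c β iff α ∧ ◇β is consistent. -/
def relC (Ax : Set Formula) (α β : Formula) : Prop := FmlConsistent Ax (α.and β.dia)

/-- Ṽ(α, ψ) = 1 iff ⊢ α → ψ. -/
noncomputable def tildeV (Ax : Set Formula) (α ψ : Formula) : Bool :=
  @decide _ (Classical.propDecidable (Prv Ax (α.imp ψ)))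

-- α′ : the unique consistent member of C_{h,n} provably implied by α.
open Classical in
noncomputable def prime (Ax : Set Formula) (h n : ℕ) (α : Formula) : Formula :=
  if hx : ∃ α', α' ∈ C h n ∧ FmlConsistent Ax α' ∧ Prv Ax (α.imp α') then hx.choose
  else Formula.bot

/-- α →m β iff ⊢ α → ◇β′ and every ξ ∈ C_{h,n} with ⊢ β → ◇ξ satisfies ⊢ α → ◇ξ. -/
def relM (Ax : Set Formula) (h n : ℕ) (α β : Formula) : Prop :=
  Prv Ax (α.imp (prime Ax h n β).dia) ∧
  ∀ ξ ∈ C h n, Prv Ax (β.imp ξ.dia) → Prv Ax (α.imp ξ.dia)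

/-- α →d β (for GL) iff α →m β and some γ ∈ C_{h,n} has ⊢ α → ◇γ and ⊢ β → □¬γ. -/
def relD (h n : ℕ) (α β : Formula) : Prop :=
  relM GLAx h n α β ∧
  ∃ γ ∈ C h n, Prv GLAx (α.imp γ.dia) ∧ Prv GLAx (β.imp γ.neg.box)


section Prop1
variable {Ax : Set Formula}

def σ3 (a b c : Formula) : ℕ → Formula := fun k => if k = 0 then a else if k = 1 then b else c

lemma prv_ax1 (a b : Formula) : Prv Ax (a.imp (b.imp a)) := by
  simpa [Formula.subst, σ3, pv, qv] using (Prv.ax1 (Ax := Ax)).subst (σ3 a b b)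

lemma prv_ax2 (a b c : Formula) :
    Prv Ax ((a.imp (b.imp c)).imp ((a.imp b).imp (a.imp c))) := by
  simpa [Formula.subst, σ3, pv, qv, rv] using (Prv.ax2 (Ax := Ax)).subst (σ3 a b c)

lemma prv_ax3 (a b : Formula) : Prv Ax ((a.neg.imp b.neg).imp (b.imp a)) := by
  simpa [Formula.subst, σ3, pv, qv, Formula.neg] using (Prv.ax3 (Ax := Ax)).subst (σ3 a b b)

lemma prv_axK (a b : Formula) : Prv Ax ((a.imp b).box.imp (a.box.imp b.box)) := by
  simpa [Formula.subst, σ3, pv, qv] using (Prv.axK (Ax := Ax)).subst (σ3 a b b)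

lemma prv_id (a : Formula) : Prv Ax (a.imp a) :=
  ((prv_ax2 a (a.imp a) a).mp (prv_ax1 a (a.imp a))).mp (prv_ax1 a a)

/-- Derivations from a set of hypotheses. -/
inductive Ded (Ax : Set Formula) : Set Formula → Formula → Prop
  | hyp {Γ φ} : φ ∈ Γ → Ded Ax Γ φ
  | thm {Γ φ} : Prv Ax φ → Ded Ax Γ φ
  | mp {Γ φ ψ} : Ded Ax Γ (φ.imp ψ) → Ded Ax Γ φ → Ded Ax Γ ψ

lemma Ded.mono {Γ Γ' : Set Formula} {φ} (hΓ : Γ ⊆ Γ') (h : Ded Ax Γ φ) : Ded Ax Γ' φ := by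
  induction h with
  | hyp h => exact .hyp (hΓ h)
  | thm h => exact .thm h
  | mp _ _ ih1 ih2 => exact ih1.mp ih2

lemma ded_to_prv {φ} (h : Ded Ax (∅ : Set Formula) φ) : Prv Ax φ := by
  induction h with
  | hyp h => exact absurd h (Set.notMem_empty _)
  | thm h => exact h
  | mp _ _ ih1 ih2 => exact ih1.mp ih2

/-- Deduction theorem. -/
lemma Ded.dt {Γ : Set Formula} {ψ φ} (h : Ded Ax (insert ψ Γ) φ) : Ded Ax Γ (ψ.imp φ) := by
  induction h with
  | @hyp φ h =>
    rcases h with h | h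
    · exact .thm (by rw [h]; exact prv_id ψ)
    · exact (Ded.thm (prv_ax1 φ ψ)).mp (.hyp h)
  | @thm φ h => exact (Ded.thm (prv_ax1 φ ψ)).mp (.thm h)
  | @mp φ χ _ _ ih1 ih2 => exact ((Ded.thm (prv_ax2 ψ φ χ)).mp ih1).mp ih2

-- several propositional schemata, via the deduction theorem
lemma prv_neg_imp (a b : Formula) : Prv Ax (a.neg.imp (a.imp b)) := by
  apply ded_to_prv; apply Ded.dt; apply Ded.dt
  -- from {¬a, a} derive b
  have hna : Ded Ax (insert a (insert a.neg ∅)) a.neg := .hyp (Or.inr (Or.inl rfl))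
  have ha : Ded Ax (insert a (insert a.neg ∅)) a := .hyp (Or.inl rfl)
  have h1 : Ded Ax (insert a (insert a.neg ∅)) (b.neg.imp a.neg) :=
    (Ded.thm (prv_ax1 a.neg b.neg)).mp hna
  exact ((Ded.thm (prv_ax3 b a)).mp h1).mp ha

lemma prv_pos_negimp (a b : Formula) : Prv Ax (a.imp (b.neg.imp (a.imp b).neg)) := by
  apply ded_to_prv; apply Ded.dt; apply Ded.dt; apply Ded.dt
  -- Γ = {a, ¬b, a→b} ⊢ ⊥
  set Γ : Set Formula := insert (a.imp b) (insert b.neg (insert a ∅)) with hΓ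
  have ha : Ded Ax Γ a := .hyp (by simp [hΓ])
  have hnb : Ded Ax Γ b.neg := .hyp (by simp [hΓ])
  have hab : Ded Ax Γ (a.imp b) := .hyp (by simp [hΓ])
  exact hnb.mp (hab.mp ha)

lemma prv_contra (a b : Formula) : Prv Ax ((a.imp b).imp (b.neg.imp a.neg)) := by
  apply ded_to_prv; apply Ded.dt; apply Ded.dt; apply Ded.dt
  set Γ : Set Formula := insert a (insert b.neg (insert (a.imp b) ∅)) with hΓ
  have ha : Ded Ax Γ a := .hyp (by simp [hΓ])
  have hnb : Ded Ax Γ b.neg := .hyp (by simp [hΓ])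
  have hab : Ded Ax Γ (a.imp b) := .hyp (by simp [hΓ])
  exact hnb.mp (hab.mp ha)

lemma prv_negcase (a : Formula) : Prv Ax ((a.neg.imp a).imp a) := by
  have h1 : Prv Ax (a.neg.imp (a.neg.imp a).neg) := by
    apply ded_to_prv; apply Ded.dt
    set Γ : Set Formula := insert a.neg (∅ : Set Formula) with hΓ
    have hna : Ded Ax Γ a.neg := .hyp (by simp [hΓ])
    -- ¬a → ((¬a→a) → ⊥): from ¬a and ¬a→a get a then ⊥. So derive (¬a→a).neg via dt
    have : Ded Ax (insert (a.neg.imp a) Γ) Formula.bot := by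
      have hna' : Ded Ax (insert (a.neg.imp a) Γ) a.neg := .hyp (by simp [hΓ])
      have h2 : Ded Ax (insert (a.neg.imp a) Γ) (a.neg.imp a) := .hyp (by simp)
      exact hna'.mp (h2.mp hna')
    exact this.dt
  exact (prv_ax3 a (a.neg.imp a)).mp h1

lemma prv_cases (a φ : Formula) : Prv Ax ((a.imp φ).imp ((a.neg.imp φ).imp φ)) := by
  apply ded_to_prv; apply Ded.dt; apply Ded.dt
  set Γ : Set Formula := insert (a.neg.imp φ) (insert (a.imp φ) ∅) with hΓ
  have h1 : Ded Ax Γ (a.imp φ) := .hyp (by simp [hΓ])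
  have h2 : Ded Ax Γ (a.neg.imp φ) := .hyp (by simp [hΓ])
  -- φ.neg → a.neg, φ.neg → a → ⊥ hence ¬φ → φ then φ
  have h3 : Ded Ax Γ (φ.neg.imp a.neg) := (Ded.thm (prv_contra a φ)).mp h1
  -- from ¬φ: ¬a, then φ (via h2), then ⊥; so ¬φ → φ? derive (¬φ → φ):
  have h4 : Ded Ax (insert φ.neg Γ) φ := by
    have hnφ : Ded Ax (insert φ.neg Γ) φ.neg := .hyp (by simp)
    have hna : Ded Ax (insert φ.neg Γ) a.neg := (h3.mono (Set.subset_insert _ _)).mp hnφ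
    exact (h2.mono (Set.subset_insert _ _)).mp hna
  exact (Ded.thm (prv_negcase φ)).mp h4.dt

end Prop1
section TautSec
variable {Ax : Set Formula}

/-- Boolean evaluation: var/const/box are treated as atoms valued by `g`. -/
def beval (g : Formula → Bool) : Formula → Bool
  | .bot => false
  | .imp a b => !(beval g a) || beval g b
  | x => g x

@[simp] lemma beval_bot (g : Formula → Bool) : beval g Formula.bot = false := rfl
@[simp] lemma beval_imp (g : Formula → Bool) (a b : Formula) : beval g (a.imp b) = (!(beval g a) || beval g b) := rfl
@[simp] lemma beval_var (g : Formula → Bool) (n : ℕ) : beval g (.var n) = g (.var n) := rfl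
@[simp] lemma beval_const (g : Formula → Bool) (n : ℕ) : beval g (.const n) = g (.const n) := rfl
@[simp] lemma beval_box (g : Formula → Bool) (a : Formula) : beval g a.box = g a.box := rfl
@[simp] lemma beval_neg (g : Formula → Bool) (a : Formula) : beval g a.neg = !(beval g a) := by simp [Formula.neg]
@[simp] lemma beval_top (g : Formula → Bool) : beval g Formula.top = true := rfl
@[simp] lemma beval_and (g : Formula → Bool) (a b : Formula) : beval g (a.and b) = (beval g a && beval g b) := by
  simp [Formula.and]
@[simp] lemma beval_or (g : Formula → Bool) (a b : Formula) : beval g (a.or b) = (beval g a || beval g b) := by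
  simp [Formula.or]
@[simp] lemma beval_dia (g : Formula → Bool) (a : Formula) : beval g a.dia = !(g a.neg.box) := by simp [Formula.dia]

/-- Tautology: true under every boolean assignment to the atoms. -/
def Taut (φ : Formula) : Prop := ∀ g : Formula → Bool, beval g φ = true

/-- Atomic subformulas relevant to boolean evaluation. -/
def batoms : Formula → List Formula
  | .bot => []
  | .imp a b => batoms a ++ batoms b
  | x => [x]

def blit (g : Formula → Bool) (a : Formula) : Formula := if g a then a else a.neg

def litCtx (g : Formula → Bool) (L : List Formula) : Set Formula :=
  {x | ∃ a ∈ L, x = blit g a}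

lemma kalmar_main (g : Formula → Bool) :
    ∀ φ : Formula, Ded Ax (litCtx g (batoms φ)) (blit (beval g) φ) := by
  intro φ
  induction φ with
  | var k => exact .hyp ⟨_, by simp [batoms], rfl⟩
  | const k => exact .hyp ⟨_, by simp [batoms], rfl⟩
  | box a _ => exact .hyp ⟨_, by simp [batoms], rfl⟩
  | bot => exact .thm (by simp [blit]; exact prv_id Formula.bot)
  | imp a b iha ihb =>
    have hsa : litCtx g (batoms a) ⊆ litCtx g (batoms (a.imp b)) := by
      rintro x ⟨c, hc, rfl⟩; exact ⟨c, by simp [batoms, hc], rfl⟩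
    have hsb : litCtx g (batoms b) ⊆ litCtx g (batoms (a.imp b)) := by
      rintro x ⟨c, hc, rfl⟩; exact ⟨c, by simp [batoms, hc], rfl⟩
    have iha := iha.mono hsa
    have ihb := ihb.mono hsb
    cases hb : beval g b
    · cases ha : beval g a
      · -- a false: a.imp b true
        rw [blit]; simp [ha, hb]
        rw [blit] at iha; rw [ha] at iha; simp at iha
        exact (Ded.thm (prv_neg_imp a b)).mp iha
      · -- a true, b false: ¬(a→b)
        rw [blit]; simp [ha, hb]
        rw [blit] at iha ihb; rw [ha] at iha; rw [hb] at ihb; simp at iha ihb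
        exact ((Ded.thm (prv_pos_negimp a b)).mp iha).mp ihb
    · rw [blit]; simp [hb]
      rw [blit] at ihb; rw [hb] at ihb; simp at ihb
      exact (Ded.thm (prv_ax1 b a)).mp ihb

lemma kalmar_elim {φ : Formula} :
    ∀ L : List Formula, (∀ g : Formula → Bool, Ded Ax (litCtx g L) φ) → Prv Ax φ := by
  intro L
  induction L with
  | nil =>
    intro h
    apply ded_to_prv
    have := h (fun _ => true)
    refine this.mono ?_
    rintro x ⟨a, ha, rfl⟩; simp at ha
  | cons a L ih =>
    intro h
    apply ih
    intro g
    have h1 : Ded Ax (insert a (litCtx g L)) φ := by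
      refine (h (Function.update g a true)).mono ?_
      rintro x ⟨c, hc, rfl⟩
      by_cases hca : c = a
      · subst hca; left; simp [blit]
      · right
        rcases List.mem_cons.mp hc with hc | hc
        · exact absurd hc hca
        · exact ⟨c, hc, by simp [blit, Function.update_of_ne hca]⟩
    have h0 : Ded Ax (insert a.neg (litCtx g L)) φ := by
      refine (h (Function.update g a false)).mono ?_
      rintro x ⟨c, hc, rfl⟩
      by_cases hca : c = a
      · subst hca; left; simp [blit]
      · right
        rcases List.mem_cons.mp hc with hc | hc
        · exact absurd hc hca
        · exact ⟨c, hc, by simp [blit, Function.update_of_ne hca]⟩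
    exact ((Ded.thm (prv_cases a φ)).mp h1.dt).mp h0.dt

/-- Every (boolean) tautology is provable. -/
lemma taut_prv {φ : Formula} (h : Taut φ) : Prv Ax φ := by
  apply kalmar_elim (batoms φ)
  intro g
  have := kalmar_main (Ax := Ax) g φ
  rwa [blit, h g, if_pos rfl] at this

lemma prv_mp1 {a φ : Formula} (ht : Taut (a.imp φ)) (h : Prv Ax a) : Prv Ax φ :=
  (taut_prv ht).mp h

lemma prv_mp2 {a b φ : Formula} (ht : Taut (a.imp (b.imp φ)))
    (h1 : Prv Ax a) (h2 : Prv Ax b) : Prv Ax φ := ((taut_prv ht).mp h1).mp h2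

end TautSec
section ListsSec
variable {Ax : Set Formula}

lemma beval_listConj (g : Formula → Bool) : ∀ L : List Formula,
    beval g (listConj L) = L.all (beval g)
  | [] => by simp [listConj]
  | [a] => by simp [listConj]
  | a :: b :: l => by
    rw [listConj, beval_and, beval_listConj g (b :: l)]
    simp

lemma beval_listDisj (g : Formula → Bool) : ∀ L : List Formula,
    beval g (listDisj L) = L.any (beval g)
  | [] => by simp [listDisj]
  | [a] => by simp [listDisj]
  | a :: b :: l => by
    rw [listDisj, beval_or, beval_listDisj g (b :: l)]
    simp

lemma beval_listConj_cons (g : Formula → Bool) (a : Formula) (l : List Formula) :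
    beval g (listConj (a :: l)) = (beval g a && beval g (listConj l)) := by
  rw [beval_listConj, List.all_cons, beval_listConj]

lemma beval_listDisj_cons (g : Formula → Bool) (a : Formula) (l : List Formula) :
    beval g (listDisj (a :: l)) = (beval g a || beval g (listDisj l)) := by
  rw [beval_listDisj, List.any_cons, beval_listDisj]

lemma beval_imp_true {g : Formula → Bool} {a b : Formula}
    (h : beval g a = true → beval g b = true) : beval g (a.imp b) = true := by
  rw [beval_imp]; cases hx : beval g a
  · simp
  · simp [h hx]

lemma beval_imp_true_iff {g : Formula → Bool} {a b : Formula} :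
    beval g (a.imp b) = true ↔ (beval g a = true → beval g b = true) := by
  rw [beval_imp]; cases hx : beval g a <;> simp

lemma prv_and_intro {a b : Formula} (h1 : Prv Ax a) (h2 : Prv Ax b) : Prv Ax (a.and b) := by
  refine prv_mp2 ?_ h1 h2
  intro g; simp only [beval_imp, beval_and]
  cases beval g a <;> cases beval g b <;> rfl

lemma prv_listConj : ∀ {L : List Formula}, (∀ ψ ∈ L, Prv Ax ψ) → Prv Ax (listConj L)
  | [], _ => taut_prv (by intro g; simp [listConj])
  | [a], h => by simpa [listConj] using h a (by simp)
  | a :: b :: l, h => by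
    rw [listConj]
    exact prv_and_intro (h a (by simp)) (prv_listConj (fun ψ hψ => h ψ (by simp [hψ])))

lemma prv_imp_trans {a b c : Formula} (h1 : Prv Ax (a.imp b)) (h2 : Prv Ax (b.imp c)) :
    Prv Ax (a.imp c) := by
  apply ded_to_prv; apply Ded.dt
  exact (Ded.thm h2).mp ((Ded.thm h1).mp (.hyp (by simp)))

lemma prv_imp_comp2 {x a b c : Formula} (h1 : Prv Ax (x.imp a)) (h2 : Prv Ax (x.imp b))
    (h3 : Prv Ax (a.imp (b.imp c))) : Prv Ax (x.imp c) := by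
  apply ded_to_prv; apply Ded.dt
  have hx : Ded Ax (insert x ∅) x := .hyp (by simp)
  exact ((Ded.thm h3).mp ((Ded.thm h1).mp hx)).mp ((Ded.thm h2).mp hx)

lemma prv_box_mono {a b : Formula} (h : Prv Ax (a.imp b)) : Prv Ax (a.box.imp b.box) :=
  (prv_axK a b).mp h.nec

lemma prv_box_k2 {a b c : Formula} (h : Prv Ax (a.imp (b.imp c))) :
    Prv Ax (a.box.imp (b.box.imp c.box)) :=
  prv_imp_trans (prv_box_mono h) (prv_axK b c)

lemma prv_box_listConj : ∀ L : List Formula,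
    Prv Ax ((listConj (L.map Formula.box)).imp (listConj L).box)
  | [] => by
    have h1 : Prv Ax (listConj ([] : List Formula)).box :=
      Prv.nec (taut_prv (by intro g; simp [listConj]))
    exact (prv_ax1 _ _).mp h1
  | a :: l => by
    have h1 : Prv Ax ((listConj ((a :: l).map Formula.box)).imp a.box) := by
      apply taut_prv; intro g; apply beval_imp_true; intro h
      rw [List.map_cons, beval_listConj_cons] at h
      exact (Bool.and_eq_true_iff.mp h).1
    have h2 : Prv Ax ((listConj ((a :: l).map Formula.box)).imp
        (listConj (l.map Formula.box))) := by
      apply taut_prv; intro g; apply beval_imp_true; intro h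
      rw [List.map_cons, beval_listConj_cons] at h
      exact (Bool.and_eq_true_iff.mp h).2
    have h3 := prv_imp_trans h2 (prv_box_listConj l)
    have h4 : Prv Ax (a.box.imp ((listConj l).box.imp (a.and (listConj l)).box)) := by
      apply prv_box_k2; apply taut_prv; intro g
      simp only [beval_imp, beval_and]
      cases beval g a <;> cases beval g (listConj l) <;> rfl
    have h5 := prv_imp_comp2 h1 h3 h4
    refine prv_imp_trans h5 (prv_box_mono (taut_prv ?_))
    intro g
    rw [beval_imp, beval_listConj_cons, beval_and]
    cases beval g a <;> cases beval g (listConj l) <;> rfl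

end ListsSec
section NodupSec

/-- Two sublists of a duplicate-free list with the same members are equal. -/
lemma sublist_ext {α : Type*} : ∀ {l S S' : List α}, l.Nodup → S.Sublist l → S'.Sublist l →
    (∀ a, a ∈ S ↔ a ∈ S') → S = S'
  | [], S, S', _, h1, h2, _ => by
    rw [List.sublist_nil.mp h1, List.sublist_nil.mp h2]
  | a :: l, S, S', hnd, h1, h2, hm => by
    have hal : a ∉ l := (List.nodup_cons.mp hnd).1
    have hnd' : l.Nodup := (List.nodup_cons.mp hnd).2
    rcases List.sublist_cons_iff.mp h1 with h1' | ⟨r, rfl, hr⟩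
    · rcases List.sublist_cons_iff.mp h2 with h2' | ⟨r', rfl, hr'⟩
      · exact sublist_ext hnd' h1' h2' hm
      · exact absurd (h1'.subset ((hm a).mpr (by simp))) hal
    · rcases List.sublist_cons_iff.mp h2 with h2' | ⟨r', rfl, hr'⟩
      · exact absurd (h2'.subset ((hm a).mp (by simp))) hal
      · have : r = r' := by
          refine sublist_ext hnd' hr hr' (fun x => ?_)
          constructor
          · intro hx
            rcases List.mem_cons.mp ((hm x).mp (List.mem_cons_of_mem a hx)) with rfl | h
            · exact absurd (hr.subset hx) hal
            · exact h
          · intro hx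
            rcases List.mem_cons.mp ((hm x).mpr (List.mem_cons_of_mem a hx)) with rfl | h
            · exact absurd (hr'.subset hx) hal
            · exact h
        rw [this]

lemma and_inj {a b c d : Formula} (h : a.and b = c.and d) : a = c ∧ b = d := by
  simp only [Formula.and, Formula.neg, Formula.imp.injEq] at h
  exact ⟨h.1.1, h.1.2.1⟩

lemma listConj_inj : ∀ {l₁ l₂ : List Formula}, l₁.length = l₂.length →
    listConj l₁ = listConj l₂ → l₁ = l₂
  | [], [], _, _ => rfl
  | [a], [b], _, h => by
    rw [show listConj [a] = a from rfl, show listConj [b] = b from rfl] at h; rw [h]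
  | a :: b :: l, c :: d :: m, hl, h => by
    rw [listConj, listConj] at h
    obtain ⟨h1, h2⟩ := and_inj h
    have := listConj_inj (l₁ := b :: l) (l₂ := d :: m) (by simpa using hl) h2
    rw [h1, this]
  | [a], c :: d :: m, hl, _ => by simp at hl
  | a :: b :: l, [c], hl, _ => by simp at hl
  | [], c :: m, hl, _ => by simp at hl
  | a :: l, [], hl, _ => by simp at hl

lemma dia_inj {a b : Formula} (h : a.dia = b.dia) : a = b := by
  simp only [Formula.dia, Formula.neg, Formula.imp.injEq, Formula.box.injEq] at h
  exact h.1.1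

lemma listConj_dia_inj : ∀ {l₁ l₂ : List Formula},
    listConj (l₁.map Formula.dia) = listConj (l₂.map Formula.dia) → l₁ = l₂
  | [], [], _ => rfl
  | [], [b], h => by
    simp [listConj, Formula.top, Formula.dia, Formula.neg] at h
  | [b], [], h => by
    simp [listConj, Formula.top, Formula.dia, Formula.neg] at h
  | [], b :: c :: m, h => by
    simp [listConj, Formula.top, Formula.dia, Formula.and, Formula.neg] at h
  | b :: c :: m, [], h => by
    simp [listConj, Formula.top, Formula.dia, Formula.and, Formula.neg] at h
  | [a], [b], h => by
    simp only [List.map_cons, List.map_nil] at h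
    rw [show listConj [Formula.dia a] = a.dia from rfl,
      show listConj [Formula.dia b] = b.dia from rfl] at h
    rw [dia_inj h]
  | [a], b :: c :: m, h => by
    simp only [List.map_cons, List.map_nil] at h
    rw [show listConj [Formula.dia a] = a.dia from rfl, listConj] at h
    simp [Formula.dia, Formula.and, Formula.neg] at h
  | a :: b :: l, [c], h => by
    simp only [List.map_cons, List.map_nil] at h
    rw [show listConj [Formula.dia c] = c.dia from rfl, listConj] at h
    simp [Formula.dia, Formula.and, Formula.neg] at h
  | a :: b :: l, c :: d :: m, h => by
    rw [List.map_cons, List.map_cons, listConj, List.map_cons (f := Formula.dia) (l := d :: m),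
      List.map_cons, listConj] at h
    obtain ⟨h1, h2⟩ := and_inj h
    have := listConj_dia_inj (l₁ := b :: l) (l₂ := d :: m) (by rw [List.map_cons, List.map_cons]; exact h2)
    rw [dia_inj h1, this]

lemma atom_ne_neg (i : ℕ) : atom i ≠ (atom i).neg := by
  rcases i with _ | n
  · simp [atom, Formula.neg]
  · by_cases hm : n % 2 = 0 <;> simp [atom, hm, Formula.neg]

lemma hatT_inj {n : ℕ} {T T' : List ℕ} (hT : T.Sublist (List.range (n + 1)))
    (hT' : T'.Sublist (List.range (n + 1))) (h : hatT n T = hatT n T') : T = T' := by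
  rw [hatT, hatT] at h
  have hmaps := listConj_inj (by simp) h
  rw [List.map_inj_left] at hmaps
  refine sublist_ext (List.nodup_range) hT hT' (fun i => ?_)
  by_cases hi : i ∈ List.range (n + 1)
  · have := hmaps i hi
    by_cases h1 : i ∈ T <;> by_cases h2 : i ∈ T' <;> simp [h1, h2] at this ⊢
    · exact absurd this (atom_ne_neg i)
    · exact absurd this.symm (atom_ne_neg i)
  · constructor
    · intro h'; exact absurd (hT.subset h') hi
    · intro h'; exact absurd (hT'.subset h') hi

lemma canonAlpha_inj {n : ℕ} {S S' : List Formula} {T T' : List ℕ}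
    (hT : T.Sublist (List.range (n + 1))) (hT' : T'.Sublist (List.range (n + 1)))
    (h : canonAlpha n S T = canonAlpha n S' T') : S = S' ∧ T = T' := by
  rw [canonAlpha, canonAlpha] at h
  obtain ⟨h1, h2⟩ := and_inj h
  obtain ⟨_, h3⟩ := and_inj h2
  exact ⟨listConj_dia_inj h1, hatT_inj hT hT' h3⟩

lemma nodup_C : ∀ h n : ℕ, (C h n).Nodup
  | 0, n => by
    rw [C]
    refine List.Nodup.map_on ?_ (List.nodup_sublists.mpr (List.nodup_range))
    intro T hT T' hT' h
    exact hatT_inj (List.mem_sublists.mp hT) (List.mem_sublists.mp hT') h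
  | h + 1, n => by
    rw [C]
    rw [List.nodup_flatMap]
    constructor
    · intro S hS
      refine List.Nodup.map_on ?_ (List.nodup_sublists.mpr (List.nodup_range))
      intro T hT T' hT' hc
      exact (canonAlpha_inj (List.mem_sublists.mp hT) (List.mem_sublists.mp hT') hc).2
    · rw [List.pairwise_iff_forall_sublist]
      rintro S S' hSS
      have hne : S ≠ S' := by
        rintro rfl
        exact absurd hSS.subset (by
          intro hsub
          have := List.Nodup.sublist hSS (List.nodup_sublists.mpr (nodup_C h n))
          simp at this)
      intro x hx hx'
      rw [List.mem_map] at hx hx'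
      obtain ⟨T, hT, rfl⟩ := hx
      obtain ⟨T', hT', hc⟩ := hx'
      exact hne ((canonAlpha_inj (List.mem_sublists.mp hT')
        (List.mem_sublists.mp hT) hc).1).symm

end NodupSec
section CanonSec
variable {Ax : Set Formula}

lemma beval_hatT (g : Formula → Bool) (n : ℕ) (T : List ℕ) :
    beval g (hatT n T) = true ↔
      ∀ i ∈ List.range (n + 1), beval g (atom i) = decide (i ∈ T) := by
  rw [hatT, beval_listConj, List.all_eq_true]
  constructor
  · intro h i hi
    have := h _ (List.mem_map_of_mem hi)
    by_cases hT : i ∈ T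
    · simpa [hT] using this
    · rw [if_neg hT, beval_neg, Bool.not_eq_eq_eq_not] at this
      simpa [hT] using this
  · intro h x hx
    rw [List.mem_map] at hx
    obtain ⟨i, hi, rfl⟩ := hx
    have := h i hi
    by_cases hT : i ∈ T
    · simpa [hT] using this
    · rw [if_neg hT, beval_neg]
      simp [hT] at this
      simp [this]

lemma beval_hatT_filter (g : Formula → Bool) (n : ℕ) :
    beval g (hatT n ((List.range (n + 1)).filter (fun i => beval g (atom i)))) = true := by
  rw [beval_hatT]
  intro i hi
  cases hx : beval g (atom i) <;> simp [List.mem_filter, hx, hi]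

/-- At least one canonical formula is provably the case. -/
lemma prv_listDisj_C (n : ℕ) : ∀ h : ℕ, Prv Ax (listDisj (C h n))
  | 0 => by
    apply taut_prv; intro g
    rw [C, beval_listDisj, List.any_eq_true]
    refine ⟨hatT n ((List.range (n + 1)).filter (fun i => beval g (atom i))),
      List.mem_map_of_mem (List.mem_sublists.mpr (List.filter_sublist)), ?_⟩
    exact beval_hatT_filter g n
  | h + 1 => by
    have ihA : Prv Ax (listDisj (C h n)) := prv_listDisj_C n h
    set X := C h n with hX
    set star : List Formula → Formula := fun S =>
      (listConj ((listDisj X :: (X.filter (fun ψ => decide (ψ ∉ S))).map Formula.neg).map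
        Formula.box)).imp (listDisj S).box with hstardef
    have hstar : ∀ S : List Formula, Prv Ax (star S) := by
      intro S
      refine prv_imp_trans (prv_box_listConj _) (prv_box_mono (taut_prv ?_))
      intro g; apply beval_imp_true; intro hc
      rw [beval_listConj_cons] at hc
      obtain ⟨h1, h2⟩ := Bool.and_eq_true_iff.mp hc
      rw [beval_listConj, List.all_eq_true] at h2
      rw [beval_listDisj, List.any_eq_true] at h1 ⊢
      obtain ⟨ψ, hψX, hψ⟩ := h1
      by_cases hS : ψ ∈ S
      · exact ⟨ψ, hS, hψ⟩
      · have := h2 ψ.neg (List.mem_map_of_mem (List.mem_filter.mpr ⟨hψX, by simp [hS]⟩))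
        rw [beval_neg, hψ] at this
        simp at this
    set P := (listDisj X).box :: (X.sublists.map star) with hP
    have hPrv : ∀ ψ ∈ P, Prv Ax ψ := by
      intro ψ hψ
      rcases List.mem_cons.mp hψ with rfl | hψ
      · exact ihA.nec
      · obtain ⟨S, _, rfl⟩ := List.mem_map.mp hψ
        exact hstar S
    refine prv_mp1 ?_ (prv_listConj hPrv)
    intro g; apply beval_imp_true; intro hc
    rw [beval_listConj_cons] at hc
    obtain ⟨hbox, hrest⟩ := Bool.and_eq_true_iff.mp hc
    rw [beval_listConj, List.all_eq_true] at hrest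
    rw [beval_listDisj, List.any_eq_true]
    set S0 := X.filter (fun ψ => !(beval g ψ.neg.box)) with hS0
    set T0 := (List.range (n + 1)).filter (fun i => beval g (atom i)) with hT0
    refine ⟨canonAlpha n S0 T0, ?_, ?_⟩
    · rw [C, List.mem_flatMap]
      exact ⟨S0, List.mem_sublists.mpr (List.filter_sublist),
        List.mem_map_of_mem (List.mem_sublists.mpr (List.filter_sublist))⟩
    · rw [canonAlpha, beval_and, beval_and]
      have c1 : beval g (listConj (S0.map Formula.dia)) = true := by
        rw [beval_listConj, List.all_eq_true]
        intro x hx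
        obtain ⟨ψ, hψ, rfl⟩ := List.mem_map.mp hx
        have := (List.mem_filter.mp hψ).2
        rw [beval_dia]
        simpa using this
      have c2 : beval g (listDisj S0).box = true := by
        have hs := hrest (star S0) (List.mem_map_of_mem
          (List.mem_sublists.mpr (List.filter_sublist)))
        rw [hstardef] at hs
        rw [beval_imp_true_iff] at hs
        rw [show beval g (listDisj S0).box = g (listDisj S0).box from rfl]
        rw [show beval g ((listDisj S0).box) = g ((listDisj S0).box) from rfl] at hs
        apply hs
        rw [List.map_cons, beval_listConj_cons]
        refine Bool.and_eq_true_iff.mpr ⟨hbox, ?_⟩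
        rw [beval_listConj, List.all_eq_true]
        intro x hx
        rw [List.mem_map] at hx
        obtain ⟨y, hy, rfl⟩ := hx
        rw [List.mem_map] at hy
        obtain ⟨ψ, hψ, rfl⟩ := hy
        have hψX := (List.mem_filter.mp hψ).1
        have hψS : ψ ∉ S0 := by
          have := (List.mem_filter.mp hψ).2
          simpa using this
        have hne : ¬ (!(beval g ψ.neg.box)) = true := by
          intro hcon
          exact hψS (List.mem_filter.mpr ⟨hψX, hcon⟩)
        simpa using hne
      have c3 : beval g (hatT n T0) = true := beval_hatT_filter g n
      rw [c1, c2, c3]; rfl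
end CanonSec
section AtMostSec
variable {Ax : Set Formula}

lemma exists_mem_mismatch {γ : Type*} {l S S' : List γ} (hnd : l.Nodup)
    (h1 : S.Sublist l) (h2 : S'.Sublist l) (hne : S ≠ S') :
    ∃ a, ((a ∈ S ∧ a ∉ S') ∨ (a ∈ S' ∧ a ∉ S)) ∧ a ∈ l := by
  have hnall : ¬ ∀ a, a ∈ S ↔ a ∈ S' := fun hall => hne (sublist_ext hnd h1 h2 hall)
  obtain ⟨a, ha⟩ := not_forall.mp hnall
  by_cases hS : a ∈ S <;> by_cases hS' : a ∈ S'
  · exact absurd (iff_of_true hS hS') ha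
  · exact ⟨a, Or.inl ⟨hS, hS'⟩, h1.subset hS⟩
  · exact ⟨a, Or.inr ⟨hS', hS⟩, h2.subset hS'⟩
  · exact absurd (iff_of_false hS hS') ha

lemma prv_and_neg_comm {a b : Formula} (h : Prv Ax ((a.and b).neg)) :
    Prv Ax ((b.and a).neg) := by
  refine prv_mp1 ?_ h
  intro g
  simp only [beval_imp, beval_neg, beval_and]
  cases beval g a <;> cases beval g b <;> rfl

lemma canon_incompat {n : ℕ} {S S' : List Formula} {T T' : List ℕ} {ψ : Formula}
    (hmem : ψ ∈ S) (hNC : ∀ χ ∈ S', Prv Ax ((ψ.and χ).neg)) :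
    Prv Ax (((canonAlpha n S T).and (canonAlpha n S' T')).neg) := by
  have d1 : Prv Ax (listConj (S'.map (fun χ => (ψ.and χ).neg))) :=
    prv_listConj (by
      intro x hx
      obtain ⟨χ, hχ, rfl⟩ := List.mem_map.mp hx
      exact hNC χ hχ)
  have d2 : Prv Ax ((listDisj S').imp ψ.neg) := by
    refine prv_mp1 ?_ d1
    intro g; apply beval_imp_true; intro hc; apply beval_imp_true; intro hd
    rw [beval_listConj, List.all_eq_true] at hc
    rw [beval_listDisj, List.any_eq_true] at hd
    obtain ⟨χ, hχ, hbχ⟩ := hd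
    have := hc _ (List.mem_map_of_mem hχ)
    rw [beval_neg, beval_and, hbχ] at this
    rw [beval_neg]
    simpa using this
  have d3 : Prv Ax ((listDisj S').box.imp ψ.neg.box) := prv_box_mono d2
  refine prv_mp1 ?_ d3
  intro g; apply beval_imp_true; intro himp
  rw [beval_imp_true_iff] at himp
  rw [beval_neg, beval_and]
  cases hα : beval g (canonAlpha n S T)
  · rfl
  · cases hβ : beval g (canonAlpha n S' T')
    · rfl
    · exfalso
      rw [canonAlpha, beval_and, beval_and] at hα hβ
      have pα1 := (Bool.and_eq_true_iff.mp hα).1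
      have pβ2 := (Bool.and_eq_true_iff.mp (Bool.and_eq_true_iff.mp hβ).2).1
      have hbοx : beval g ψ.neg.box = true := himp pβ2
      rw [beval_listConj, List.all_eq_true] at pα1
      have := pα1 _ (List.mem_map_of_mem hmem)
      rw [beval_dia] at this
      rw [show beval g ψ.neg.box = g ψ.neg.box from rfl] at hbοx
      rw [hbοx] at this
      simp at this

lemma prv_atMost (n : ℕ) : ∀ h : ℕ, ∀ α ∈ C h n, ∀ β ∈ C h n, α ≠ β →
    Prv Ax ((α.and β).neg)
  | 0 => by
    intro α hα β hβ hne
    rw [C] at hα hβ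
    obtain ⟨T, hT, rfl⟩ := List.mem_map.mp hα
    obtain ⟨T', hT', rfl⟩ := List.mem_map.mp hβ
    rw [List.mem_sublists] at hT hT'
    have hTne : T ≠ T' := fun hTT => hne (by rw [hTT])
    obtain ⟨i, hi, hirange⟩ := exists_mem_mismatch (List.nodup_range) hT hT' hTne
    apply taut_prv; intro g
    rw [beval_neg]
    cases hc : beval g ((hatT n T).and (hatT n T'))
    · rfl
    exfalso
    rw [beval_and] at hc
    obtain ⟨h1, h2⟩ := Bool.and_eq_true_iff.mp hc
    have e1 := (beval_hatT g n T).mp h1 i hirange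
    have e2 := (beval_hatT g n T').mp h2 i hirange
    rcases hi with ⟨hiT, hiT'⟩ | ⟨hiT', hiT⟩ <;> simp [hiT, hiT'] at e1 e2 <;> rw [e1] at e2 <;>
      exact Bool.false_ne_true (by simpa using e2)
  | h + 1 => by
    intro α hα β hβ hne
    rw [C, List.mem_flatMap] at hα hβ
    obtain ⟨S, hS, hα'⟩ := hα
    obtain ⟨T, hT, rfl⟩ := List.mem_map.mp hα'
    obtain ⟨S', hS', hβ'⟩ := hβ
    obtain ⟨T', hT', rfl⟩ := List.mem_map.mp hβ'
    rw [List.mem_sublists] at hS hS' hT hT'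
    by_cases hTT : T = T'
    · subst hTT
      have hSne : S ≠ S' := fun hSS => hne (by rw [hSS])
      obtain ⟨ψ, hψ, _⟩ := exists_mem_mismatch (nodup_C h n) hS hS' hSne
      rcases hψ with ⟨hψS, hψS'⟩ | ⟨hψS', hψS⟩
      · refine canon_incompat hψS (fun χ hχ => ?_)
        exact prv_atMost n h ψ (hS.subset hψS) χ (hS'.subset hχ)
          (fun heq => hψS' (heq ▸ hχ))
      · refine prv_and_neg_comm (canon_incompat hψS' (fun χ hχ => ?_))
        exact prv_atMost n h ψ (hS'.subset hψS') χ (hS.subset hχ)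
          (fun heq => hψS (heq ▸ hχ))
    · obtain ⟨i, hi, hirange⟩ := exists_mem_mismatch (List.nodup_range) hT hT' hTT
      apply taut_prv; intro g
      rw [beval_neg]
      cases hc : beval g ((canonAlpha n S T).and (canonAlpha n S' T'))
      · rfl
      exfalso
      rw [beval_and] at hc
      obtain ⟨h1, h2⟩ := Bool.and_eq_true_iff.mp hc
      rw [canonAlpha, beval_and, beval_and] at h1 h2
      have e1 := (beval_hatT g n T).mp (Bool.and_eq_true_iff.mp
        (Bool.and_eq_true_iff.mp h1).2).2 i hirange
      have e2 := (beval_hatT g n T').mp (Bool.and_eq_true_iff.mp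
        (Bool.and_eq_true_iff.mp h2).2).2 i hirange
      rcases hi with ⟨hiT, hiT'⟩ | ⟨hiT', hiT⟩ <;> simp [hiT, hiT'] at e1 e2 <;> rw [e1] at e2 <;>
        exact Bool.false_ne_true (by simpa using e2)

lemma prv_bigOplus {X : List Formula} (h1 : Prv Ax (listDisj X))
    (h2 : ∀ α ∈ X, ∀ β ∈ X, α ≠ β → Prv Ax ((α.and β).neg)) : Prv Ax (bigOplus X) := by
  set P := listDisj X ::
    X.flatMap (fun α => (X.filter (· ≠ α)).map (fun β => (α.and β).neg)) with hPdef
  have hPrv : ∀ ψ ∈ P, Prv Ax ψ := by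
    intro ψ hψ
    rcases List.mem_cons.mp hψ with rfl | hψ
    · exact h1
    · rw [List.mem_flatMap] at hψ
      obtain ⟨α, hαX, hψ⟩ := hψ
      obtain ⟨β, hβ, rfl⟩ := List.mem_map.mp hψ
      have hβX := (List.mem_filter.mp hβ).1
      have hβα : β ≠ α := by simpa using (List.mem_filter.mp hβ).2
      exact h2 α hαX β hβX (Ne.symm hβα)
  refine prv_mp1 ?_ (prv_listConj hPrv)
  intro g; apply beval_imp_true; intro hc
  rw [beval_listConj_cons] at hc
  obtain ⟨hd, hr⟩ := Bool.and_eq_true_iff.mp hc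
  rw [beval_listConj, List.all_eq_true] at hr
  rw [beval_listDisj, List.any_eq_true] at hd
  obtain ⟨α, hαX, hα⟩ := hd
  rw [bigOplus, beval_listDisj, List.any_eq_true]
  refine ⟨_, List.mem_map_of_mem hαX, ?_⟩
  rw [beval_and, hα, Bool.true_and, beval_listConj, List.all_eq_true]
  intro x hx
  obtain ⟨β, hβ, rfl⟩ := List.mem_map.mp hx
  have hβX := (List.mem_filter.mp hβ).1
  have hβα : β ≠ α := by simpa using (List.mem_filter.mp hβ).2
  have := hr ((α.and β).neg) (by
    rw [List.mem_flatMap]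
    exact ⟨α, hαX, List.mem_map_of_mem (List.mem_filter.mpr ⟨hβX, by simpa using hβα⟩)⟩)
  rw [beval_neg, beval_and, hα, Bool.true_and] at this
  rw [beval_neg]
  exact this

end AtMostSec
/-- For Σ ⊆ {T,B,4,D} and all h, n, ⊢_{KΣ} ⊕C_{h,n}. -/
theorem bigOplus_provable (Sig : Set ModalAxiom)
    (hSig : Sig ⊆ {ModalAxiom.T, ModalAxiom.B, ModalAxiom.four, ModalAxiom.D})
    (h n : ℕ) :
    Prv (KAxioms Sig) (bigOplus (C h n)) :=
  prv_bigOplus (prv_listDisj_C n h)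
    (fun α hα β hβ hne => prv_atMost n h α hα β hβ hne)

end ModalSOA
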